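/- Weak convergence of product measures: if the sequence of probability measures (μ_n) on X converges weakly to μ and the sequence (ν_n) on Y converges weakly to ν, then the sequence of product measures (μ_n ⊗ ν_n) on X × Y converges weakly to μ ⊗ ν. -/

import Mathlib

open MeasureTheory Filter Topology BoundedContinuousFunction

section Aux

open Metric EMetric Set ENNReal

variable {A B : Type*} [MeasurableSpace A] [PseudoEMetricSpace A]
  [MeasurableSpace B] [PseudoEMetricSpace B]

lemma thickening_section_subset_fst (r : ℝ) (s : Set (A × B)) (y : B) :
    Metric.thickening r ((fun x => (x, y)) ⁻¹' s)
      ⊆ (fun x => (x, y)) ⁻¹' (Metric.thickening r s) := by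
  intro x hx
  rw [Metric.mem_thickening_iff_exists_edist_lt] at hx
  obtain ⟨x', hx', hd⟩ := hx
  rw [Set.mem_preimage, Metric.mem_thickening_iff_exists_edist_lt]
  exact ⟨(x', y), hx', by simpa [Prod.edist_eq] using hd⟩

lemma thickening_section_subset_snd (r : ℝ) (s : Set (A × B)) (x : A) :
    Metric.thickening r (Prod.mk x ⁻¹' s) ⊆ Prod.mk x ⁻¹' (Metric.thickening r s) := by
  intro y hy
  rw [Metric.mem_thickening_iff_exists_edist_lt] at hy
  obtain ⟨y', hy', hd⟩ := hy
  rw [Set.mem_preimage, Metric.mem_thickening_iff_exists_edist_lt]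
  exact ⟨(x, y'), hy', by simpa [Prod.edist_eq] using hd⟩

lemma levyProkhorovEDist_prod_left [OpensMeasurableSpace (A × B)]
    (μ1 μ2 : Measure A) (ν : Measure B)
    [IsProbabilityMeasure μ1] [IsProbabilityMeasure μ2] [IsProbabilityMeasure ν] :
    levyProkhorovEDist (μ1.prod ν) (μ2.prod ν) ≤ levyProkhorovEDist μ1 μ2 := by
  apply levyProkhorovEDist_le_of_forall_le
  intro ε s ε_gt ε_lt_top s_mble
  have h_thick : MeasurableSet (Metric.thickening ε.toReal s) :=
    isOpen_thickening.measurableSet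
  rw [Measure.prod_apply_symm s_mble, Measure.prod_apply_symm h_thick]
  calc ∫⁻ y, μ1 ((fun x => (x, y)) ⁻¹' s) ∂ν
      ≤ ∫⁻ y, (μ2 ((fun x => (x, y)) ⁻¹' Metric.thickening ε.toReal s) + ε) ∂ν := by
        apply lintegral_mono
        intro y
        have h1 : μ1 ((fun x => (x, y)) ⁻¹' s)
            ≤ μ2 (Metric.thickening ε.toReal ((fun x => (x, y)) ⁻¹' s)) + ε :=
          left_measure_le_of_levyProkhorovEDist_lt ε_gt
            (s_mble.preimage measurable_prodMk_right)
        exact h1.trans (add_le_add_left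
          (measure_mono (thickening_section_subset_fst ε.toReal s y)) ε)
    _ = (∫⁻ y, μ2 ((fun x => (x, y)) ⁻¹' Metric.thickening ε.toReal s) ∂ν) + ε := by
        rw [lintegral_add_right _ measurable_const, lintegral_const, measure_univ, mul_one]

lemma levyProkhorovEDist_prod_right [OpensMeasurableSpace (A × B)]
    (μ : Measure A) (ν1 ν2 : Measure B)
    [IsProbabilityMeasure μ] [IsProbabilityMeasure ν1] [IsProbabilityMeasure ν2] :
    levyProkhorovEDist (μ.prod ν1) (μ.prod ν2) ≤ levyProkhorovEDist ν1 ν2 := by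
  apply levyProkhorovEDist_le_of_forall_le
  intro ε s ε_gt ε_lt_top s_mble
  have h_thick : MeasurableSet (Metric.thickening ε.toReal s) :=
    isOpen_thickening.measurableSet
  rw [Measure.prod_apply s_mble, Measure.prod_apply h_thick]
  calc ∫⁻ x, ν1 (Prod.mk x ⁻¹' s) ∂μ
      ≤ ∫⁻ x, (ν2 (Prod.mk x ⁻¹' Metric.thickening ε.toReal s) + ε) ∂μ := by
        apply lintegral_mono
        intro x
        have h1 : ν1 (Prod.mk x ⁻¹' s)
            ≤ ν2 (Metric.thickening ε.toReal (Prod.mk x ⁻¹' s)) + ε :=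
          left_measure_le_of_levyProkhorovEDist_lt ε_gt
            (s_mble.preimage measurable_prodMk_left)
        exact h1.trans (add_le_add_left
          (measure_mono (thickening_section_subset_snd ε.toReal s x)) ε)
    _ = (∫⁻ x, ν2 (Prod.mk x ⁻¹' Metric.thickening ε.toReal s) ∂μ) + ε := by
        rw [lintegral_add_right _ measurable_const, lintegral_const, measure_univ, mul_one]

lemma levyProkhorovEDist_prod_le [OpensMeasurableSpace (A × B)]
    (μ1 μ2 : Measure A) (ν1 ν2 : Measure B)
    [IsProbabilityMeasure μ1] [IsProbabilityMeasure μ2]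
    [IsProbabilityMeasure ν1] [IsProbabilityMeasure ν2] :
    levyProkhorovEDist (μ1.prod ν1) (μ2.prod ν2)
      ≤ levyProkhorovEDist μ1 μ2 + levyProkhorovEDist ν1 ν2 :=
  (levyProkhorovEDist_triangle _ (μ2.prod ν1) _).trans
    (add_le_add (levyProkhorovEDist_prod_left μ1 μ2 ν1)
      (levyProkhorovEDist_prod_right μ2 ν1 ν2))

lemma levyProkhorovDist_prod_le [OpensMeasurableSpace (A × B)]
    (μ1 μ2 : Measure A) (ν1 ν2 : Measure B)
    [IsProbabilityMeasure μ1] [IsProbabilityMeasure μ2]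
    [IsProbabilityMeasure ν1] [IsProbabilityMeasure ν2] :
    levyProkhorovDist (μ1.prod ν1) (μ2.prod ν2)
      ≤ levyProkhorovDist μ1 μ2 + levyProkhorovDist ν1 ν2 := by
  have h := levyProkhorovEDist_prod_le μ1 μ2 ν1 ν2
  rw [levyProkhorovDist, levyProkhorovDist, levyProkhorovDist, ← ENNReal.toReal_add
    (levyProkhorovEDist_ne_top _ _) (levyProkhorovEDist_ne_top _ _)]
  exact ENNReal.toReal_mono (by
    exact ENNReal.add_ne_top.mpr ⟨levyProkhorovEDist_ne_top _ _, levyProkhorovEDist_ne_top _ _⟩) h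

end Aux

/-- **Weak convergence of product measures.**
Let `X, Y` be separable metrizable spaces with their Borel σ-algebras.  If the probability
measures `μs n` converge weakly to `μ` (i.e. integrals of bounded continuous functions
converge) and `νs n` converge weakly to `ν`, then `μs n ⊗ νs n` converges weakly to
`μ ⊗ ν`. -/
theorem weak_convergence_prod
    {X Y : Type*}
    [TopologicalSpace X] [TopologicalSpace.MetrizableSpace X]
    [TopologicalSpace.SeparableSpace X]
    [MeasurableSpace X] [BorelSpace X]
    [TopologicalSpace Y] [TopologicalSpace.MetrizableSpace Y]
    [TopologicalSpace.SeparableSpace Y]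
    [MeasurableSpace Y] [BorelSpace Y]
    (μs : ℕ → Measure X) (μ : Measure X)
    (νs : ℕ → Measure Y) (ν : Measure Y)
    [∀ n, IsProbabilityMeasure (μs n)] [IsProbabilityMeasure μ]
    [∀ n, IsProbabilityMeasure (νs n)] [IsProbabilityMeasure ν]
    (hμ : ∀ g : X →ᵇ ℝ,
      Tendsto (fun n => ∫ x, g x ∂(μs n)) atTop (𝓝 (∫ x, g x ∂μ)))
    (hν : ∀ g : Y →ᵇ ℝ,
      Tendsto (fun n => ∫ y, g y ∂(νs n)) atTop (𝓝 (∫ y, g y ∂ν))) :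
    ∀ g : (X × Y) →ᵇ ℝ,
      Tendsto (fun n => ∫ p, g p ∂((μs n).prod (νs n))) atTop
        (𝓝 (∫ p, g p ∂(μ.prod ν))) := by
  letI : MetricSpace X := TopologicalSpace.metrizableSpaceMetric X
  letI : MetricSpace Y := TopologicalSpace.metrizableSpaceMetric Y
  haveI : SecondCountableTopology X := UniformSpace.secondCountable_of_separable X
  haveI : SecondCountableTopology Y := UniformSpace.secondCountable_of_separable Y
  -- probability-measure bundles
  set P : ℕ → ProbabilityMeasure X := fun n => ⟨μs n, inferInstance⟩ with hP
  set Q : ℕ → ProbabilityMeasure Y := fun n => ⟨νs n, inferInstance⟩ with hQ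
  set Pl : ProbabilityMeasure X := ⟨μ, inferInstance⟩ with hPl
  set Ql : ProbabilityMeasure Y := ⟨ν, inferInstance⟩ with hQl
  have hPt : Tendsto P atTop (𝓝 Pl) :=
    ProbabilityMeasure.tendsto_iff_forall_integral_tendsto.mpr hμ
  have hQt : Tendsto Q atTop (𝓝 Ql) :=
    ProbabilityMeasure.tendsto_iff_forall_integral_tendsto.mpr hν
  -- convert to Lévy-Prokhorov distances tending to zero
  have hPd : Tendsto (fun n => levyProkhorovDist (μs n) μ) atTop (𝓝 0) := by
    have := tendsto_iff_dist_tendsto_zero.mp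
      ((LevyProkhorov.continuous_ofMeasure_probabilityMeasure (Ω := X)).continuousAt.tendsto.comp
        hPt)
    exact this
  have hQd : Tendsto (fun n => levyProkhorovDist (νs n) ν) atTop (𝓝 0) := by
    have := tendsto_iff_dist_tendsto_zero.mp
      ((LevyProkhorov.continuous_ofMeasure_probabilityMeasure (Ω := Y)).continuousAt.tendsto.comp
        hQt)
    exact this
  -- the product distance tends to zero
  have hprod : Tendsto (fun n => levyProkhorovDist ((μs n).prod (νs n)) (μ.prod ν))
      atTop (𝓝 0) := by
    apply squeeze_zero (fun n => ENNReal.toReal_nonneg)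
      (fun n => levyProkhorovDist_prod_le (μs n) μ (νs n) ν)
    simpa using hPd.add hQd
  -- conclude weak convergence of products
  set R : ℕ → ProbabilityMeasure (X × Y) := fun n => ⟨(μs n).prod (νs n), inferInstance⟩ with hR
  set Rl : ProbabilityMeasure (X × Y) := ⟨μ.prod ν, inferInstance⟩ with hRl
  have hRt : Tendsto (fun n => LevyProkhorov.ofMeasure (R n))
      atTop (𝓝 (LevyProkhorov.ofMeasure Rl)) :=
    tendsto_iff_dist_tendsto_zero.mpr hprod
  have : Tendsto R atTop (𝓝 Rl) :=
    (LevyProkhorov.continuous_toMeasure_probabilityMeasure (Ω := X × Y)).continuousAt.tendsto.comp hRt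
  exact ProbabilityMeasure.tendsto_iff_forall_integral_tendsto.mp this
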